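/- Decentralized dual reformulation: for continuous μ-strongly convex increasing f_k and C > 0, min { ∑_k f_k(x_k) : x_k ≥ y_k ≥ 0, ∑_k y_k ≥ C } = − min_{p₁,…,p_n ≥ 0} ( ∑_{k=1}^n max_{x_k ≥ 0}( p_k x_k − f_k(x_k) ) − C · min_{k=1,…,n} p_k ). -/
import Mathlib

/-- Every monotone convex function on `ℝ` has a nonnegative subgradient at any point. -/
lemma exists_nonneg_subgradient (V : ℝ → ℝ) (hV : ConvexOn ℝ Set.univ V)
    (hm : Monotone V) (C : ℝ) :
    ∃ q : ℝ, 0 ≤ q ∧ ∀ c, V C + q * (c - C) ≤ V c := by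
  set S : Set ℝ := (fun c => (V C - V c) / (C - c)) '' Set.Iio C with hS
  have hmem : ∀ c < C, (V C - V c) / (C - c) ∈ S := fun c hc => ⟨c, hc, rfl⟩
  have hne : S.Nonempty := ⟨_, hmem (C - 1) (by linarith)⟩
  have hub : ∀ s ∈ S, s ≤ (V (C + 1) - V C) / (C + 1 - C) := by
    rintro s ⟨c, hc, rfl⟩
    exact hV.slope_mono_adjacent (Set.mem_univ c) (Set.mem_univ (C + 1)) hc (by linarith)
  have hbdd : BddAbove S := ⟨_, hub⟩
  refine ⟨sSup S, ?_, ?_⟩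
  · have h0 : (0 : ℝ) ≤ (V C - V (C - 1)) / (C - (C - 1)) := by
      have h1 := hm (show C - 1 ≤ C by linarith)
      have h2 : C - (C - 1) = 1 := by ring
      rw [h2, div_one]; linarith
    exact h0.trans (le_csSup hbdd (hmem (C - 1) (by linarith)))
  · intro c
    rcases lt_trichotomy c C with h | h | h
    · have hle := le_csSup hbdd (hmem c h)
      rw [div_le_iff₀ (by linarith : (0:ℝ) < C - c)] at hle
      nlinarith [hle]
    · subst h; simp
    · have hub2 : sSup S ≤ (V c - V C) / (c - C) := by
        refine csSup_le hne ?_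
        rintro s ⟨d, hd, rfl⟩
        exact hV.slope_mono_adjacent (Set.mem_univ d) (Set.mem_univ c) hd (by linarith)
      rw [le_div_iff₀ (by linarith : (0:ℝ) < c - C)] at hub2
      nlinarith [hub2]

/-- Decentralized dual reformulation: the optimal value of
`min {∑ fₖ(xₖ) : xₖ ≥ yₖ ≥ 0, ∑ yₖ ≥ C}` equals
`− min_{p ≥ 0} ( ∑ₖ max_{x ≥ 0}(pₖ x − fₖ(x)) − C minₖ pₖ )`. -/
theorem decentralized_dual (n : ℕ) (hn : 0 < n) (μ C : ℝ) (hμ : 0 < μ) (hC : 0 < C)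
    (f : Fin n → ℝ → ℝ)
    (hcont : ∀ k, ContinuousOn (f k) (Set.Ici 0))
    (hsc : ∀ k, StrongConvexOn (Set.Ici 0) μ (f k))
    (hmono : ∀ k, StrictMonoOn (f k) (Set.Ici 0)) :
    sInf {w | ∃ x y : Fin n → ℝ, (∀ k, 0 ≤ y k) ∧ (∀ k, y k ≤ x k) ∧
        C ≤ (∑ k, y k) ∧ w = ∑ k, f k (x k)}
      = - sInf {w | ∃ p : Fin n → ℝ, (∀ k, 0 ≤ p k) ∧
          w = (∑ k, sSup ((fun x => p k * x - f k x) '' Set.Ici 0))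
            - C * Finset.univ.inf'
                (Finset.univ_nonempty_iff.mpr (Fin.pos_iff_nonempty.mp hn)) p} := by
  classical
  -- basic facts about f
  have hfmono : ∀ k, ∀ x : ℝ, 0 ≤ x → f k 0 ≤ f k x := fun k x hx =>
    (hmono k).monotoneOn (Set.mem_Ici.2 le_rfl) (Set.mem_Ici.2 hx) hx
  have hconv : ∀ k, ConvexOn ℝ (Set.Ici 0) (f k) := fun k =>
    (hsc k).convexOn (fun r => by positivity)
  have hquad : ∀ k, ∀ x : ℝ, 0 ≤ x → f k 0 + μ / 4 * x ^ 2 ≤ f k x := by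
    intro k x hx
    have h := (hsc k).2 (Set.mem_Ici.2 hx) (Set.mem_Ici.2 (le_refl (0:ℝ)))
      (show (0:ℝ) ≤ 1/2 by norm_num) (show (0:ℝ) ≤ 1/2 by norm_num)
      (show (1/2:ℝ) + 1/2 = 1 by norm_num)
    have h2 : f k 0 ≤ f k ((1/2 : ℝ) • x + (1/2 : ℝ) • (0:ℝ)) := by
      apply hfmono; simp [smul_eq_mul]; positivity
    have hnx : ‖x - 0‖ = x := by rw [sub_zero, Real.norm_eq_abs, abs_of_nonneg hx]
    rw [hnx] at h
    simp only [smul_eq_mul] at h h2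
    nlinarith [h, h2]
  -- the conjugate-type sets are bounded above
  have hbddg : ∀ (k : Fin n) (p : ℝ),
      ∀ w ∈ (fun x => p * x - f k x) '' Set.Ici 0, w ≤ p ^ 2 / μ - f k 0 := by
    rintro k p w ⟨x, hx, rfl⟩
    have hx0 : (0:ℝ) ≤ x := hx
    have key : p * x - μ / 4 * x ^ 2 ≤ p ^ 2 / μ := by
      rw [le_div_iff₀ hμ]
      nlinarith [sq_nonneg (μ * x - 2 * p)]
    have := hquad k x hx0
    simp only
    linarith
  have hgne : ∀ (k : Fin n) (p : ℝ), ((fun x => p * x - f k x) '' Set.Ici 0).Nonempty :=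
    fun k p => ⟨p * 0 - f k 0, 0, Set.self_mem_Ici, rfl⟩
  have hgBdd : ∀ (k : Fin n) (p : ℝ), BddAbove ((fun x => p * x - f k x) '' Set.Ici 0) :=
    fun k p => ⟨_, hbddg k p⟩
  -- value function
  set A : ℝ → Set ℝ := fun c =>
    {w | ∃ x : Fin n → ℝ, (∀ k, 0 ≤ x k) ∧ c ≤ ∑ k, x k ∧ w = ∑ k, f k (x k)} with hA
  set Vf : ℝ → ℝ := fun c => sInf (A c) with hVf
  have hA_ne : ∀ c, (A c).Nonempty := by
    intro c
    refine ⟨∑ k, f k |c|, fun _ => |c|, fun _ => abs_nonneg c, ?_, rfl⟩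
    rw [Finset.sum_const, Finset.card_univ, Fintype.card_fin, nsmul_eq_mul]
    calc c ≤ |c| := le_abs_self c
      _ = 1 * |c| := (one_mul _).symm
      _ ≤ (n : ℝ) * |c| := by
          apply mul_le_mul_of_nonneg_right _ (abs_nonneg c)
          exact_mod_cast hn
  have hA_lb : ∀ c, ∀ w ∈ A c, (∑ k, f k 0) ≤ w := by
    rintro c w ⟨x, hx0, -, rfl⟩
    exact Finset.sum_le_sum fun k _ => hfmono k _ (hx0 k)
  have hA_bdd : ∀ c, BddBelow (A c) := fun c => ⟨_, hA_lb c⟩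
  have hVf_le : ∀ c, ∀ w ∈ A c, Vf c ≤ w := fun c w hw => csInf_le (hA_bdd c) hw
  -- Vf is monotone
  have hVmono : Monotone Vf := by
    intro c₁ c₂ h
    refine csInf_le_csInf (hA_bdd c₁) (hA_ne c₂) ?_
    rintro w ⟨x, hx0, hs, rfl⟩
    exact ⟨x, hx0, h.trans hs, rfl⟩
  -- Vf is convex
  have hVconv : ConvexOn ℝ Set.univ Vf := by
    refine ⟨convex_univ, ?_⟩
    intro c₁ _ c₂ _ a b ha hb hab
    simp only [smul_eq_mul]
    apply le_of_forall_pos_le_add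
    intro ε hε
    obtain ⟨w₁, hw₁m, hw₁⟩ := Real.lt_sInf_add_pos (hA_ne c₁) hε
    obtain ⟨w₂, hw₂m, hw₂⟩ := Real.lt_sInf_add_pos (hA_ne c₂) hε
    obtain ⟨x₁, hx₁0, hx₁s, rfl⟩ := hw₁m
    obtain ⟨x₂, hx₂0, hx₂s, rfl⟩ := hw₂m
    have hmem : (∑ k, f k (a * x₁ k + b * x₂ k)) ∈ A (a * c₁ + b * c₂) := by
      refine ⟨fun k => a * x₁ k + b * x₂ k,
        fun k => add_nonneg (mul_nonneg ha (hx₁0 k)) (mul_nonneg hb (hx₂0 k)), ?_, rfl⟩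
      rw [Finset.sum_add_distrib, ← Finset.mul_sum, ← Finset.mul_sum]
      exact add_le_add (mul_le_mul_of_nonneg_left hx₁s ha) (mul_le_mul_of_nonneg_left hx₂s hb)
    have h1 : Vf (a * c₁ + b * c₂) ≤ ∑ k, f k (a * x₁ k + b * x₂ k) := hVf_le _ _ hmem
    have h2 : (∑ k, f k (a * x₁ k + b * x₂ k))
        ≤ a * (∑ k, f k (x₁ k)) + b * (∑ k, f k (x₂ k)) := by
      rw [Finset.mul_sum, Finset.mul_sum, ← Finset.sum_add_distrib]
      refine Finset.sum_le_sum fun k _ => ?_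
      have := (hconv k).2 (Set.mem_Ici.2 (hx₁0 k)) (Set.mem_Ici.2 (hx₂0 k)) ha hb hab
      simpa [smul_eq_mul] using this
    have h3 : a * (∑ k, f k (x₁ k)) + b * (∑ k, f k (x₂ k))
        ≤ a * (Vf c₁ + ε) + b * (Vf c₂ + ε) :=
      add_le_add (mul_le_mul_of_nonneg_left hw₁.le ha) (mul_le_mul_of_nonneg_left hw₂.le hb)
    have h4 : a * (Vf c₁ + ε) + b * (Vf c₂ + ε) = a * Vf c₁ + b * Vf c₂ + ε := by
      have : a + b = 1 := hab; nlinarith [this]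
    linarith
  -- the primal set is A C
  have hPA : {w | ∃ x y : Fin n → ℝ, (∀ k, 0 ≤ y k) ∧ (∀ k, y k ≤ x k) ∧
      C ≤ (∑ k, y k) ∧ w = ∑ k, f k (x k)} = A C := by
    ext w
    constructor
    · rintro ⟨x, y, hy0, hyx, hys, rfl⟩
      exact ⟨x, fun k => (hy0 k).trans (hyx k),
        hys.trans (Finset.sum_le_sum fun k _ => hyx k), rfl⟩
    · rintro ⟨x, hx0, hxs, rfl⟩
      exact ⟨x, x, hx0, fun k => le_rfl, hxs, rfl⟩
  rw [hPA]
  -- the dual set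
  set D : Set ℝ := {w | ∃ p : Fin n → ℝ, (∀ k, 0 ≤ p k) ∧
      w = (∑ k, sSup ((fun x => p k * x - f k x) '' Set.Ici 0))
        - C * Finset.univ.inf'
            (Finset.univ_nonempty_iff.mpr (Fin.pos_iff_nonempty.mp hn)) p} with hD
  -- weak duality: every dual value is ≥ -Vf C
  have hweak : ∀ w' ∈ D, -Vf C ≤ w' := by
    rintro w' ⟨p, hp0, rfl⟩
    set m := Finset.univ.inf'
      (Finset.univ_nonempty_iff.mpr (Fin.pos_iff_nonempty.mp hn)) p with hm
    have hm0 : 0 ≤ m := Finset.le_inf' _ _ fun k _ => hp0 k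
    have key : ∀ w ∈ A C, -w ≤ (∑ k, sSup ((fun x => p k * x - f k x) '' Set.Ici 0)) - C * m := by
      rintro w ⟨x, hx0, hxs, rfl⟩
      have hterm : ∀ k ∈ Finset.univ, m * x k - f k (x k)
          ≤ sSup ((fun x => p k * x - f k x) '' Set.Ici 0) := by
        intro k _
        have h1 : m * x k ≤ p k * x k :=
          mul_le_mul_of_nonneg_right (Finset.inf'_le _ (Finset.mem_univ k)) (hx0 k)
        have h2 : p k * x k - f k (x k)
            ≤ sSup ((fun x => p k * x - f k x) '' Set.Ici 0) :=
          le_csSup (hgBdd k (p k)) ⟨x k, Set.mem_Ici.2 (hx0 k), rfl⟩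
        linarith
      have hsum := Finset.sum_le_sum hterm
      rw [Finset.sum_sub_distrib, ← Finset.mul_sum] at hsum
      have hmC : m * C ≤ m * (∑ k, x k) := mul_le_mul_of_nonneg_left hxs hm0
      have : C * m = m * C := mul_comm _ _
      linarith
    have : ∀ w ∈ A C, -((∑ k, sSup ((fun x => p k * x - f k x) '' Set.Ici 0)) - C * m) ≤ w := by
      intro w hw; linarith [key w hw]
    have := le_csInf (hA_ne C) this
    linarith
  -- strong duality: exhibit a dual point with value ≤ -Vf C
  obtain ⟨q, hq0, hqsub⟩ := exists_nonneg_subgradient Vf hVconv hVmono C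
  set Dq : ℝ := (∑ k, sSup ((fun x => q * x - f k x) '' Set.Ici 0)) - C * q with hDq
  have hDq_mem : Dq ∈ D := by
    refine ⟨fun _ => q, fun _ => hq0, ?_⟩
    rw [Finset.inf'_const]
  have hDq_le : Dq ≤ -Vf C := by
    apply le_of_forall_pos_le_add
    intro ε hε
    have hεn : 0 < ε / n := div_pos hε (by exact_mod_cast hn)
    have hx : ∀ k : Fin n, ∃ x : ℝ, 0 ≤ x ∧
        sSup ((fun x => q * x - f k x) '' Set.Ici 0) - ε / n < q * x - f k x := by
      intro k
      obtain ⟨w, ⟨x, hxm, rfl⟩, hw⟩ := exists_lt_of_lt_csSup (hgne k q)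
        (by linarith [hεn] :
          sSup ((fun x => q * x - f k x) '' Set.Ici 0) - ε / n
            < sSup ((fun x => q * x - f k x) '' Set.Ici 0))
      exact ⟨x, hxm, hw⟩
    choose x hx0 hxlt using hx
    set S := ∑ k, x k with hSdef
    have hsum : (∑ k, sSup ((fun x => q * x - f k x) '' Set.Ici 0))
        ≤ ∑ k, (q * x k - f k (x k) + ε / n) :=
      Finset.sum_le_sum fun k _ => by linarith [hxlt k]
    have hsum2 : (∑ k, (q * x k - f k (x k) + ε / n))
        = q * S - (∑ k, f k (x k)) + ε := by
      rw [Finset.sum_add_distrib, Finset.sum_sub_distrib, ← Finset.mul_sum,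
        Finset.sum_const, Finset.card_univ, Fintype.card_fin, nsmul_eq_mul]
      have : (n : ℝ) * (ε / n) = ε := by
        field_simp
      rw [this]
    have hVS : Vf S ≤ ∑ k, f k (x k) := hVf_le S _ ⟨x, hx0, le_rfl, rfl⟩
    have hsub := hqsub S
    linarith [hsum, hsum2 ▸ hsum, hVS, hsub]
  -- conclude
  have hD_ne : D.Nonempty := ⟨Dq, hDq_mem⟩
  have hD_bdd : BddBelow D := ⟨-Vf C, hweak⟩
  have h1 : sInf D ≤ -Vf C := le_trans (csInf_le hD_bdd hDq_mem) hDq_le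
  have h2 : -Vf C ≤ sInf D := le_csInf hD_ne hweak
  have : sInf D = -Vf C := le_antisymm h1 h2
  rw [this, neg_neg]
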